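/- Let d_1, ..., d_T be nonnegative integers (delays) with t + d_t ≤ T for all t. For each round s define A_s = {r ≤ s : r + d_r = s}, a_s = |A_s|, and σ_t = ∑_{s=1}^{t−1} 1[s + d_s ≥ t]. Then for every t, ∑_{s=1}^{t} σ_s ≥ ∑_{s=1}^{t} a_s(a_s − 1)/2. -/

import Mathlib

open Finset

/-- Sum of a finset of distinct naturals of cardinality n is at least n(n-1)/2. -/
lemma aux_sum_distinct : ∀ n (S : Finset ℕ), S.card = n → n * (n - 1) ≤ 2 * ∑ x ∈ S, x := by
  intro n
  induction n with
  | zero => intro S _; simp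
  | succ k ih =>
    intro S hS
    have hne : S.Nonempty := card_pos.mp (by omega)
    set m := S.max' hne with hm
    have hmem : m ∈ S := S.max'_mem hne
    have hsub : S ⊆ range (m + 1) := fun x hx =>
      mem_range.mpr (Nat.lt_succ_of_le (S.le_max' x hx))
    have hcard : S.card ≤ m + 1 := by
      have := card_le_card hsub
      simpa using this
    have hcarde : (S.erase m).card = k := by
      rw [card_erase_of_mem hmem, hS]
      omega
    have ihe := ih (S.erase m) hcarde
    have hsum : ∑ x ∈ S.erase m, x + m = ∑ x ∈ S, x := Finset.sum_erase_add S _ hmem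
    have hkm : k ≤ m := by omega
    rcases k with _ | k'
    · simp
    · have h3 : k' + 1 - 1 = k' := rfl
      rw [h3] at ihe
      calc (k' + 1 + 1) * (k' + 1 + 1 - 1) = (k' + 1) * k' + 2 * (k' + 1) := by
            rw [Nat.add_sub_cancel]; ring
        _ ≤ 2 * ∑ x ∈ S.erase m, x + 2 * m := add_le_add ihe (by omega)
        _ = 2 * ∑ x ∈ S, x := by omega

theorem outstanding_ge_arrivals (T : ℕ) (d : ℕ → ℕ)
    (hd : ∀ t ∈ Finset.Icc 1 T, t + d t ≤ T)
    (a : ℕ → ℕ) (ha : ∀ s, a s = ((Finset.Icc 1 s).filter (fun r => r + d r = s)).card)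
    (σ : ℕ → ℕ) (hσ : ∀ t, σ t = ((Finset.Icc 1 (t - 1)).filter (fun s => t ≤ s + d s)).card) :
    ∀ t ∈ Finset.Icc 1 T,
      ∑ s ∈ Finset.Icc 1 t, ((a s : ℝ) * ((a s : ℝ) - 1)) / 2
        ≤ ∑ s ∈ Finset.Icc 1 t, (σ s : ℝ) := by
  intro t ht
  rw [Finset.mem_Icc] at ht
  have key : ∑ s ∈ Icc 1 t, a s * (a s - 1) ≤ 2 * ∑ s ∈ Icc 1 t, σ s := by
    -- Step A: per-round bound via distinct delays
    have stepA : ∀ s, a s * (a s - 1) ≤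
        2 * ∑ r ∈ (Icc 1 s).filter (fun r => r + d r = s), d r := by
      intro s
      set A := (Icc 1 s).filter (fun r => r + d r = s) with hA
      have hinj : Set.InjOn (fun r => s - r) A := by
        intro r1 h1 r2 h2 h
        simp only [hA, mem_coe, mem_filter, mem_Icc] at h1 h2
        simp only at h
        omega
      have hcard : (A.image (fun r => s - r)).card = a s := by
        rw [card_image_of_injOn hinj, ha]
      have hsum : ∑ x ∈ A.image (fun r => s - r), x = ∑ r ∈ A, d r := by
        rw [sum_image (fun x hx y hy h => hinj hx hy h)]
        refine sum_congr rfl (fun r hr => ?_)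
        simp only [hA, mem_filter, mem_Icc] at hr
        omega
      have := aux_sum_distinct (a s) (A.image (fun r => s - r)) hcard
      omega
    -- Step B
    have stepB : ∑ s ∈ Icc 1 t, ∑ r ∈ (Icc 1 s).filter (fun r => r + d r = s), d r
        = ∑ u ∈ Icc 1 t, if u + d u ≤ t then d u else 0 := by
      have h1 : ∀ s ∈ Icc 1 t,
          ∑ r ∈ (Icc 1 s).filter (fun r => r + d r = s), d r
            = ∑ u ∈ Icc 1 t, if u + d u = s then d u else 0 := by
        intro s hs
        rw [Finset.mem_Icc] at hs
        rw [← Finset.sum_filter]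
        congr 1
        ext r
        simp only [mem_filter, mem_Icc]
        omega
      rw [sum_congr rfl h1, Finset.sum_comm]
      refine sum_congr rfl (fun u hu => ?_)
      rw [Finset.mem_Icc] at hu
      rcases le_or_gt (u + d u) t with h | h
      · rw [if_pos h]
        have hrw : ∀ s, (if u + d u = s then d u else 0) = (if s = u + d u then d u else 0) := by
          intro s; by_cases hc : u + d u = s
          · rw [if_pos hc, if_pos hc.symm]
          · rw [if_neg hc, if_neg (fun hc' => hc hc'.symm)]
        simp only [hrw]
        rw [Finset.sum_ite_eq' (Icc 1 t) (u + d u) (fun _ => d u)]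
        rw [if_pos (by rw [Finset.mem_Icc]; omega)]
      · rw [if_neg (by omega)]
        apply Finset.sum_eq_zero
        intro s hs
        rw [Finset.mem_Icc] at hs
        rw [if_neg (by omega)]
    -- Step C
    have stepC : ∑ u ∈ Icc 1 t, (if u + d u ≤ t then d u else 0) ≤ ∑ s ∈ Icc 1 t, σ s := by
      have h1 : ∀ s ∈ Icc 1 t, σ s
          = ∑ u ∈ Icc 1 t, if u + 1 ≤ s ∧ s ≤ u + d u then 1 else 0 := by
        intro s hs
        rw [Finset.mem_Icc] at hs
        have hset : (Icc 1 (s - 1)).filter (fun u => s ≤ u + d u)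
            = (Icc 1 t).filter (fun u => u + 1 ≤ s ∧ s ≤ u + d u) := by
          ext u
          simp only [mem_filter, mem_Icc]
          omega
        rw [hσ, hset, Finset.card_eq_sum_ones, Finset.sum_filter]
      rw [sum_congr rfl h1, Finset.sum_comm]
      refine sum_le_sum (fun u hu => ?_)
      rw [Finset.mem_Icc] at hu
      rcases le_or_gt (u + d u) t with h | h
      · rw [if_pos h, ← Finset.sum_filter]
        have hset : (Icc 1 t).filter (fun s => u + 1 ≤ s ∧ s ≤ u + d u)
            = Icc (u + 1) (u + d u) := by
          ext s
          simp only [mem_filter, mem_Icc]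
          omega
        rw [hset, Finset.sum_const, smul_eq_mul, mul_one, Nat.card_Icc]
        omega
      · rw [if_neg (by omega)]
        exact Nat.zero_le _
    calc ∑ s ∈ Icc 1 t, a s * (a s - 1)
        ≤ ∑ s ∈ Icc 1 t, 2 * ∑ r ∈ (Icc 1 s).filter (fun r => r + d r = s), d r :=
          sum_le_sum (fun s _ => stepA s)
      _ = 2 * ∑ s ∈ Icc 1 t, ∑ r ∈ (Icc 1 s).filter (fun r => r + d r = s), d r := by
          rw [Finset.mul_sum]
      _ ≤ 2 * ∑ s ∈ Icc 1 t, σ s := by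
          rw [stepB]; exact Nat.mul_le_mul_left 2 stepC
  -- cast to ℝ
  have hcast : ∑ s ∈ Icc 1 t, ((a s : ℝ) * ((a s : ℝ) - 1))
      = ((∑ s ∈ Icc 1 t, a s * (a s - 1) : ℕ) : ℝ) := by
    push_cast
    refine sum_congr rfl (fun s _ => ?_)
    rcases Nat.eq_zero_or_pos (a s) with h | h
    · simp [h]
    · rw [Nat.cast_sub h]; push_cast; ring
  rw [← Finset.sum_div, div_le_iff₀ (by norm_num : (0:ℝ) < 2), hcast]
  calc ((∑ s ∈ Icc 1 t, a s * (a s - 1) : ℕ) : ℝ)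
      ≤ ((2 * ∑ s ∈ Icc 1 t, σ s : ℕ) : ℝ) := Nat.cast_le.mpr key
    _ = (∑ s ∈ Icc 1 t, (σ s : ℝ)) * 2 := by push_cast; ring
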